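/- Let d ≥ 1, σ > 0, and let u : ℝ^d → ℝ be bounded and measurable. Then the Hessian of the Gaussian smoothing f of u admits the variance-reduced symmetric representation Hf(x) = ∫_{ℝ^d} ((z zᵀ − σ² I_d)/(2σ⁴)) (u(x+z) + u(x−z) − 2u(x)) ρ_σ(z) dz for every x ∈ ℝ^d. -/

import Mathlib

open MeasureTheory Real

set_option synthInstance.maxHeartbeats 1000000
set_option maxHeartbeats 1000000

noncomputable def gaussDensity (d : ℕ) (σ : ℝ) (z : EuclideanSpace ℝ (Fin d)) : ℝ :=
  (2 * Real.pi * σ ^ 2) ^ (-(d : ℝ) / 2) * Real.exp (-‖z‖ ^ 2 / (2 * σ ^ 2))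

noncomputable def gaussSmooth (d : ℕ) (σ : ℝ) (u : EuclideanSpace ℝ (Fin d) → ℝ)
    (x : EuclideanSpace ℝ (Fin d)) : ℝ :=
  ∫ z, u (x + z) * gaussDensity d σ z

section Aux

lemma aux_pow_le_exp (k : ℕ) {c : ℝ} (hc : 0 < c) :
    ∃ C : ℝ, 0 ≤ C ∧ ∀ s : ℝ, 0 ≤ s → s ^ k ≤ C * Real.exp (c * s ^ 2) := by
  refine ⟨1 + (Nat.factorial k : ℝ) / c ^ k, by positivity, fun s hs => ?_⟩
  rcases le_total s 1 with h | h
  · have h1 : s ^ k ≤ 1 := pow_le_one₀ hs h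
    have h2 : (1 : ℝ) ≤ Real.exp (c * s ^ 2) := by
      rw [← Real.exp_zero]; exact Real.exp_le_exp.2 (by positivity)
    nlinarith [Real.exp_pos (c * s ^ 2), div_nonneg (Nat.cast_nonneg (Nat.factorial k)) (pow_nonneg hc.le k)]
  · have h1 : s ^ k ≤ (s ^ 2) ^ k := by
      rw [← pow_mul]
      exact pow_le_pow_right₀ h (by omega)
    have h2 : (c * s ^ 2) ^ k / (k.factorial : ℝ) ≤ Real.exp (c * s ^ 2) :=
      Real.pow_div_factorial_le_exp _ (by positivity) k
    have h3 : (s ^ 2) ^ k = (c * s ^ 2) ^ k / c ^ k := by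
      rw [mul_pow]; field_simp
    have h4 : (c * s ^ 2) ^ k ≤ (k.factorial : ℝ) * Real.exp (c * s ^ 2) := by
      rw [div_le_iff₀ (by positivity)] at h2; linarith [h2]
    calc s ^ k ≤ (c * s ^ 2) ^ k / c ^ k := by rw [← h3]; exact h1
      _ ≤ ((k.factorial : ℝ) * Real.exp (c * s ^ 2)) / c ^ k := by
          apply div_le_div_of_nonneg_right h4 (by positivity) |>.trans_eq rfl
      _ ≤ (1 + (k.factorial : ℝ) / c ^ k) * Real.exp (c * s ^ 2) := by
          rw [mul_comm, mul_div_assoc]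
          nlinarith [Real.exp_pos (c * s ^ 2)]

lemma aux_gauss_shift (k : ℕ) {b : ℝ} (hb : 0 < b) :
    ∃ C : ℝ, 0 ≤ C ∧ ∀ s r : ℝ, 0 ≤ s → 0 ≤ r → r ≤ s + 1 →
      s ^ k * Real.exp (-b * s ^ 2) ≤ C * Real.exp (-(b / 4) * r ^ 2) := by
  obtain ⟨C₁, hC₁, h1⟩ := aux_pow_le_exp k (half_pos hb)
  refine ⟨C₁ * Real.exp (b / 2), by positivity, fun s r hs hr hrs => ?_⟩
  have e1 : s ^ k * Real.exp (-b * s ^ 2) ≤ C₁ * Real.exp (-(b / 2) * s ^ 2) := by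
    have := h1 s hs
    calc s ^ k * Real.exp (-b * s ^ 2)
        ≤ (C₁ * Real.exp (b / 2 * s ^ 2)) * Real.exp (-b * s ^ 2) := by
          exact mul_le_mul_of_nonneg_right this (Real.exp_pos _).le
      _ = C₁ * Real.exp (-(b / 2) * s ^ 2) := by
          rw [mul_assoc, ← Real.exp_add]; ring_nf
  have e2 : Real.exp (-(b / 2) * s ^ 2) ≤ Real.exp (b / 2) * Real.exp (-(b / 4) * r ^ 2) := by
    rw [← Real.exp_add]
    apply Real.exp_le_exp.2
    have h5 : r ^ 2 ≤ 2 * s ^ 2 + 2 := by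
      nlinarith [mul_le_mul hrs hrs hr (by linarith : (0:ℝ) ≤ s + 1), sq_nonneg (s - 1)]
    nlinarith [mul_le_mul_of_nonneg_left h5 (by linarith : (0:ℝ) ≤ b / 4)]
  calc s ^ k * Real.exp (-b * s ^ 2) ≤ C₁ * Real.exp (-(b / 2) * s ^ 2) := e1
    _ ≤ C₁ * (Real.exp (b / 2) * Real.exp (-(b / 4) * r ^ 2)) :=
        mul_le_mul_of_nonneg_left e2 hC₁
    _ = C₁ * Real.exp (b / 2) * Real.exp (-(b / 4) * r ^ 2) := by ring

lemma aux_integrable_gauss (d : ℕ) {b : ℝ} (hb : 0 < b) :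
    Integrable (fun z : EuclideanSpace ℝ (Fin d) => Real.exp (-b * ‖z‖ ^ 2)) := by
  have h := GaussianFourier.integrable_cexp_neg_mul_sq_norm_add
    (V := EuclideanSpace ℝ (Fin d)) (b := (b : ℂ)) (by simpa using hb) 0 0
  have := h.norm
  simpa [Complex.norm_exp, ← Complex.ofReal_pow] using this

variable {d : ℕ} {σ : ℝ}

lemma gaussDensity_eq (z : EuclideanSpace ℝ (Fin d)) :
    gaussDensity d σ z
      = (2 * Real.pi * σ ^ 2) ^ (-(d : ℝ) / 2) * Real.exp (-(2 * σ ^ 2)⁻¹ * ‖z‖ ^ 2) := by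
  rw [gaussDensity]; ring_nf

lemma gaussDensity_continuous : Continuous (gaussDensity d σ) := by
  unfold gaussDensity
  fun_prop

lemma gaussDensity_nonneg (z : EuclideanSpace ℝ (Fin d)) : 0 ≤ gaussDensity d σ z := by
  unfold gaussDensity; positivity

lemma gaussDensity_neg (z : EuclideanSpace ℝ (Fin d)) :
    gaussDensity d σ (-z) = gaussDensity d σ z := by
  simp [gaussDensity]

lemma gaussDensity_integrable (hσ : 0 < σ) :
    Integrable (gaussDensity d σ) := by
  have : Integrable (fun z : EuclideanSpace ℝ (Fin d) =>
      (2 * Real.pi * σ ^ 2) ^ (-(d : ℝ) / 2) * Real.exp (-(2 * σ ^ 2)⁻¹ * ‖z‖ ^ 2)) :=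
    (aux_integrable_gauss d (by positivity)).const_mul _
  exact this.congr (Filter.Eventually.of_forall fun z => (gaussDensity_eq z).symm)

lemma hasFDerivAt_gaussDensity (hσ : 0 < σ) (w : EuclideanSpace ℝ (Fin d)) :
    HasFDerivAt (gaussDensity d σ)
      ((-(gaussDensity d σ w) / σ ^ 2) • innerSL ℝ w) w := by
  have hn : HasFDerivAt (fun w : EuclideanSpace ℝ (Fin d) => ‖w‖ ^ 2)
      ((2 : ℝ) • innerSL ℝ w) w := by
    have h := (hasFDerivAt_id w).norm_sq
    simpa [Nat.smul_one_eq_cast, two_smul, smul_smul] using h.congr_fderiv (by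
      ext v; simp [two_smul])
  have hq := hn.const_mul (-(2 * σ ^ 2)⁻¹)
  have he := (Real.hasDerivAt_exp (-(2 * σ ^ 2)⁻¹ * ‖w‖ ^ 2)).comp_hasFDerivAt w hq
  have hfin := he.const_mul ((2 * Real.pi * σ ^ 2) ^ (-(d : ℝ) / 2))
  have hfun : gaussDensity d σ
      = fun w : EuclideanSpace ℝ (Fin d) =>
        (2 * Real.pi * σ ^ 2) ^ (-(d : ℝ) / 2) * Real.exp (-(2 * σ ^ 2)⁻¹ * ‖w‖ ^ 2) :=
    funext fun z => gaussDensity_eq z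
  rw [hfun]
  refine hfin.congr_fderiv ?_
  ext v
  simp only [ContinuousLinearMap.coe_smul', Pi.smul_apply, ContinuousLinearMap.smul_apply,
    innerSL_apply_apply, smul_eq_mul, gaussDensity_eq]
  field_simp

end Aux

section Main

variable {d : ℕ} {σ : ℝ} {u : EuclideanSpace ℝ (Fin d) → ℝ} {M : ℝ}

/-- derivative of `y ↦ ρ (a - y)`. -/
lemma hasFDerivAt_gaussDensity_sub (hσ : 0 < σ) (a y : EuclideanSpace ℝ (Fin d)) :
    HasFDerivAt (fun y : EuclideanSpace ℝ (Fin d) => gaussDensity d σ (a - y))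
      ((gaussDensity d σ (a - y) / σ ^ 2) • innerSL ℝ (a - y)) y := by
  have hsub : HasFDerivAt (fun y : EuclideanSpace ℝ (Fin d) => a - y)
      (-(ContinuousLinearMap.id ℝ _)) y := (hasFDerivAt_id y).const_sub a
  have h := (hasFDerivAt_gaussDensity hσ (a - y)).comp y hsub
  refine h.congr_fderiv ?_
  ext v
  simp only [ContinuousLinearMap.coe_comp', Function.comp_apply, ContinuousLinearMap.neg_apply,
    ContinuousLinearMap.coe_id', id_eq, ContinuousLinearMap.coe_smul', Pi.smul_apply,
    innerSL_apply_apply, smul_eq_mul, ContinuousLinearMap.smul_apply, map_neg, inner_neg_right]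
  ring

lemma norm_innerSL_smul (r : ℝ) (w : EuclideanSpace ℝ (Fin d)) :
    ‖r • innerSL ℝ w‖ = |r| * ‖w‖ := by
  rw [norm_smul r (innerSL ℝ w), innerSL_apply_norm, Real.norm_eq_abs]

/-- First derivative of the Gaussian smoothing, with integrability of the integrand. -/
lemma gaussSmooth_hasFDerivAt (hσ : 0 < σ)
    (hu_meas : Measurable u) (hM : ∀ x, |u x| ≤ M) (y : EuclideanSpace ℝ (Fin d)) :
    Integrable (fun a : EuclideanSpace ℝ (Fin d) =>
        u a • ((gaussDensity d σ (a - y) / σ ^ 2) • innerSL ℝ (a - y))) ∧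
    HasFDerivAt (gaussSmooth d σ u)
      (∫ a, u a • ((gaussDensity d σ (a - y) / σ ^ 2) • innerSL ℝ (a - y))) y := by
  have hM0 : 0 ≤ M := le_trans (abs_nonneg _) (hM 0)
  set ρ := gaussDensity d σ with hρ
  set c₀ : ℝ := (2 * Real.pi * σ ^ 2) ^ (-(d : ℝ) / 2) with hc₀
  have hc₀0 : 0 ≤ c₀ := by positivity
  set b : ℝ := (2 * σ ^ 2)⁻¹ with hb
  have hb0 : 0 < b := by positivity
  obtain ⟨C, hC0, hC⟩ := aux_gauss_shift 1 hb0
  -- the uniform bound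
  set bound : EuclideanSpace ℝ (Fin d) → ℝ :=
    fun a => (M * c₀ / σ ^ 2 * C) * Real.exp (-(b / 4) * ‖a - y‖ ^ 2) with hbound
  have bound_int : Integrable bound := by
    exact ((aux_integrable_gauss d (by positivity : (0:ℝ) < b / 4)).comp_sub_right y).const_mul _
  have key_bound : ∀ (a : EuclideanSpace ℝ (Fin d)), ∀ x ∈ Metric.ball y 1,
      ‖u a • ((ρ (a - x) / σ ^ 2) • innerSL ℝ (a - x))‖ ≤ bound a := by
    intro a x hx
    rw [norm_smul (u a) ((ρ (a - x) / σ ^ 2) • innerSL ℝ (a - x)), norm_innerSL_smul,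
      Real.norm_eq_abs]
    have h1 : |ρ (a - x) / σ ^ 2| = ρ (a - x) / σ ^ 2 := by
      rw [abs_of_nonneg]
      exact div_nonneg (gaussDensity_nonneg _) (sq_nonneg σ)
    rw [h1]
    have hr : ‖a - y‖ ≤ ‖a - x‖ + 1 := by
      have : a - y = (a - x) + (x - y) := by abel
      rw [this]
      refine (norm_add_le _ _).trans ?_
      have : ‖x - y‖ ≤ 1 := by
        rw [← dist_eq_norm]
        exact le_of_lt (Metric.mem_ball.mp hx)
      linarith
    have h2 : ‖a - x‖ ^ 1 * Real.exp (-b * ‖a - x‖ ^ 2)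
        ≤ C * Real.exp (-(b / 4) * ‖a - y‖ ^ 2) :=
      hC _ _ (norm_nonneg _) (norm_nonneg _) hr
    rw [pow_one] at h2
    have hρeq : ρ (a - x) = c₀ * Real.exp (-b * ‖a - x‖ ^ 2) := gaussDensity_eq _
    calc |u a| * (ρ (a - x) / σ ^ 2 * ‖a - x‖)
        ≤ M * (ρ (a - x) / σ ^ 2 * ‖a - x‖) := by
          apply mul_le_mul_of_nonneg_right (hM a)
          exact mul_nonneg (div_nonneg (gaussDensity_nonneg _) (sq_nonneg σ)) (norm_nonneg _)
      _ = (M * c₀ / σ ^ 2) * (‖a - x‖ * Real.exp (-b * ‖a - x‖ ^ 2)) := by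
          rw [hρeq]; ring
      _ ≤ (M * c₀ / σ ^ 2) * (C * Real.exp (-(b / 4) * ‖a - y‖ ^ 2)) := by
          apply mul_le_mul_of_nonneg_left h2
          positivity
      _ = bound a := by rw [hbound]; ring
  have F'_meas : ∀ x : EuclideanSpace ℝ (Fin d), AEStronglyMeasurable
      (fun a : EuclideanSpace ℝ (Fin d) =>
        u a • ((ρ (a - x) / σ ^ 2) • innerSL ℝ (a - x))) volume := by
    intro x
    apply AEStronglyMeasurable.smul hu_meas.aestronglyMeasurable
    apply Continuous.aestronglyMeasurable
    exact ((gaussDensity_continuous.comp (continuous_id.sub continuous_const)).div_const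
      _).smul ((innerSL ℝ).continuous.comp (continuous_id.sub continuous_const))
  have F'_int : Integrable (fun a : EuclideanSpace ℝ (Fin d) =>
      u a • ((ρ (a - y) / σ ^ 2) • innerSL ℝ (a - y))) := by
    refine Integrable.mono' bound_int (F'_meas y) ?_
    exact Filter.Eventually.of_forall fun a => key_bound a y (Metric.mem_ball_self one_pos)
  refine ⟨F'_int, ?_⟩
  have hrw : gaussSmooth d σ u = fun x => ∫ a, u a * ρ (a - x) := by
    funext x
    rw [gaussSmooth]
    rw [← integral_sub_right_eq_self (fun a => u (x + a) * ρ a) x]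
    congr 1
    funext a
    simp
  rw [hrw]
  have hFint : Integrable (fun a => u a * ρ (a - y)) := by
    refine Integrable.bdd_mul ?_ hu_meas.aestronglyMeasurable (Filter.Eventually.of_forall fun a => by
      rw [Real.norm_eq_abs]; exact hM a)
    have : Integrable (fun a : EuclideanSpace ℝ (Fin d) =>
        c₀ * Real.exp (-b * ‖a - y‖ ^ 2)) :=
      ((aux_integrable_gauss d hb0).comp_sub_right y).const_mul _
    exact this.congr (Filter.Eventually.of_forall fun a => (gaussDensity_eq _).symm)
  have := hasFDerivAt_integral_of_dominated_of_fderiv_le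
    (F := fun x a => u a * ρ (a - x))
    (F' := fun x a => u a • ((ρ (a - x) / σ ^ 2) • innerSL ℝ (a - x)))
    (bound := bound) (x₀ := y) (s := Metric.ball y 1) (Metric.ball_mem_nhds y one_pos)
    (Filter.Eventually.of_forall fun x =>
      (hu_meas.aestronglyMeasurable.mul
        (Continuous.aestronglyMeasurable
          (gaussDensity_continuous.comp (continuous_id.sub continuous_const)))))
    hFint (F'_meas y)
    (Filter.Eventually.of_forall fun a x hx => key_bound a x hx)
    bound_int
    (Filter.Eventually.of_forall fun a x _hx =>
      ((hasFDerivAt_gaussDensity_sub hσ a x).const_mul (u a)).congr_fderiv (by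
        ext v
        simp only [ContinuousLinearMap.smul_apply, ContinuousLinearMap.coe_smul', Pi.smul_apply,
          innerSL_apply_apply, smul_eq_mul]
        try ring))
  exact this

noncomputable def gaussOp (d : ℕ) (σ : ℝ) (j : Fin d) (w : EuclideanSpace ℝ (Fin d)) :
    EuclideanSpace ℝ (Fin d) →L[ℝ] ℝ :=
  ((gaussDensity d σ w * w j) / σ ^ 4) • innerSL ℝ w
    - (gaussDensity d σ w / σ ^ 2) • innerSL ℝ (EuclideanSpace.single j 1)

noncomputable def gaussKernel (d : ℕ) (σ : ℝ) (i j : Fin d)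
    (z : EuclideanSpace ℝ (Fin d)) : ℝ :=
  ((z i * z j - σ ^ 2 * (if i = j then 1 else 0)) / σ ^ 4) * gaussDensity d σ z

section Main2

variable {d : ℕ} {σ : ℝ} {u : EuclideanSpace ℝ (Fin d) → ℝ} {M : ℝ}

lemma abs_apply_le_norm (w : EuclideanSpace ℝ (Fin d)) (j : Fin d) : |w j| ≤ ‖w‖ := by
  have h := abs_real_inner_le_norm w (EuclideanSpace.single j (1 : ℝ))
  simpa [EuclideanSpace.inner_single_right, EuclideanSpace.norm_single] using h

lemma aux_integrable_poly_gauss (d k : ℕ) {b : ℝ} (hb : 0 < b) :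
    Integrable (fun z : EuclideanSpace ℝ (Fin d) => ‖z‖ ^ k * Real.exp (-b * ‖z‖ ^ 2)) := by
  obtain ⟨C, hC0, hC⟩ := aux_pow_le_exp k (half_pos hb)
  refine Integrable.mono' ((aux_integrable_gauss d (half_pos hb)).const_mul C)
    (Continuous.aestronglyMeasurable (by fun_prop)) ?_
  refine Filter.Eventually.of_forall fun z => ?_
  rw [Real.norm_eq_abs, abs_of_nonneg (by positivity)]
  calc ‖z‖ ^ k * Real.exp (-b * ‖z‖ ^ 2)
      ≤ (C * Real.exp (b / 2 * ‖z‖ ^ 2)) * Real.exp (-b * ‖z‖ ^ 2) :=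
        mul_le_mul_of_nonneg_right (hC _ (norm_nonneg _)) (Real.exp_pos _).le
    _ = C * Real.exp (-(b / 2) * ‖z‖ ^ 2) := by
        rw [mul_assoc, ← Real.exp_add]; ring_nf

lemma fderiv_gaussSmooth_apply (hσ : 0 < σ)
    (hu_meas : Measurable u) (hM : ∀ x, |u x| ≤ M) (y : EuclideanSpace ℝ (Fin d)) (j : Fin d) :
    fderiv ℝ (gaussSmooth d σ u) y (EuclideanSpace.single j 1)
      = ∫ a, u a * (gaussDensity d σ (a - y) / σ ^ 2 * (a - y) j) := by
  obtain ⟨hint, hderiv⟩ := gaussSmooth_hasFDerivAt hσ hu_meas hM y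
  rw [hderiv.fderiv, ContinuousLinearMap.integral_apply hint]
  congr 1
  funext a
  simp only [ContinuousLinearMap.smul_apply, ContinuousLinearMap.coe_smul', Pi.smul_apply,
    innerSL_apply_apply, smul_eq_mul, EuclideanSpace.inner_single_right, conj_trivial, mul_one,
    one_mul]

lemma hasFDerivAt_phi_sub (hσ : 0 < σ) (a x : EuclideanSpace ℝ (Fin d)) (j : Fin d) :
    HasFDerivAt (fun y : EuclideanSpace ℝ (Fin d) =>
        gaussDensity d σ (a - y) / σ ^ 2 * (a - y) j)
      (gaussOp d σ j (a - x)) x := by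
  have hA : HasFDerivAt (fun y : EuclideanSpace ℝ (Fin d) => gaussDensity d σ (a - y) / σ ^ 2)
      ((σ ^ 2)⁻¹ • ((gaussDensity d σ (a - x) / σ ^ 2) • innerSL ℝ (a - x))) x := by
    have h := (hasFDerivAt_gaussDensity_sub hσ a x).const_mul (σ ^ 2)⁻¹
    refine (h.congr_fderiv rfl).congr_of_eventuallyEq ?_
    exact Filter.Eventually.of_forall fun y => by
      show gaussDensity d σ (a - y) / σ ^ 2 = (σ ^ 2)⁻¹ * gaussDensity d σ (a - y)
      rw [div_eq_inv_mul]
  have hB : HasFDerivAt (fun y : EuclideanSpace ℝ (Fin d) => (a - y) j)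
      (-(EuclideanSpace.proj j : EuclideanSpace ℝ (Fin d) →L[ℝ] ℝ)) x := by
    have h := ((EuclideanSpace.proj j :
        EuclideanSpace ℝ (Fin d) →L[ℝ] ℝ).hasFDerivAt (x := a - x)).comp x
      ((hasFDerivAt_id x).const_sub a)
    refine h.congr_fderiv ?_
    ext v
    simp
  have h := hA.mul hB
  refine h.congr_fderiv ?_
  ext v
  simp only [gaussOp, ContinuousLinearMap.add_apply, ContinuousLinearMap.coe_smul',
    Pi.smul_apply, ContinuousLinearMap.neg_apply, ContinuousLinearMap.smul_apply,
    innerSL_apply_apply, smul_eq_mul, ContinuousLinearMap.sub_apply,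
    PiLp.proj_apply, EuclideanSpace.inner_single_left, conj_trivial, one_mul]
  have hσ4 : σ ^ 4 = σ ^ 2 * σ ^ 2 := by ring
  field_simp [hσ4]
  ring

lemma gaussSmooth_hasFDerivAt2 (hσ : 0 < σ)
    (hu_meas : Measurable u) (hM : ∀ x, |u x| ≤ M) (x : EuclideanSpace ℝ (Fin d)) (j : Fin d) :
    Integrable (fun a : EuclideanSpace ℝ (Fin d) => u a • gaussOp d σ j (a - x)) ∧
    HasFDerivAt (fun y => ∫ a, u a * (gaussDensity d σ (a - y) / σ ^ 2 * (a - y) j))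
      (∫ a, u a • gaussOp d σ j (a - x)) x := by
  have hM0 : 0 ≤ M := le_trans (abs_nonneg _) (hM 0)
  set c₀ : ℝ := (2 * Real.pi * σ ^ 2) ^ (-(d : ℝ) / 2) with hc₀
  have hc₀0 : 0 ≤ c₀ := by positivity
  set b : ℝ := (2 * σ ^ 2)⁻¹ with hb
  have hb0 : 0 < b := by positivity
  obtain ⟨C₂, hC₂0, hC₂⟩ := aux_gauss_shift 2 hb0
  obtain ⟨C₀, hC₀0, hC₀⟩ := aux_gauss_shift 0 hb0
  set bound : EuclideanSpace ℝ (Fin d) → ℝ :=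
    fun a => (M * (c₀ / σ ^ 4 * C₂ + c₀ / σ ^ 2 * C₀)) * Real.exp (-(b / 4) * ‖a - x‖ ^ 2)
    with hbd
  have bound_int : Integrable bound :=
    ((aux_integrable_gauss d (by positivity : (0:ℝ) < b / 4)).comp_sub_right x).const_mul _
  have op_norm : ∀ w : EuclideanSpace ℝ (Fin d),
      ‖gaussOp d σ j w‖ ≤ c₀ / σ ^ 4 * (‖w‖ ^ 2 * Real.exp (-b * ‖w‖ ^ 2))
        + c₀ / σ ^ 2 * Real.exp (-b * ‖w‖ ^ 2) := by
    intro w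
    have hρeq : gaussDensity d σ w = c₀ * Real.exp (-b * ‖w‖ ^ 2) := gaussDensity_eq _
    refine (norm_sub_le _ _).trans ?_
    rw [norm_innerSL_smul,
      norm_smul (gaussDensity d σ w / σ ^ 2) (innerSL ℝ (EuclideanSpace.single j (1:ℝ))),
      innerSL_apply_norm, EuclideanSpace.norm_single, norm_one, mul_one, Real.norm_eq_abs]
    have h1 : |gaussDensity d σ w * w j / σ ^ 4| ≤ gaussDensity d σ w * ‖w‖ / σ ^ 4 := by
      rw [abs_div, abs_of_nonneg (by positivity : (0:ℝ) ≤ σ ^ 4), abs_mul,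
        abs_of_nonneg (gaussDensity_nonneg w)]
      apply div_le_div_of_nonneg_right ?_ (by positivity) |>.trans_eq rfl
      exact mul_le_mul_of_nonneg_left (abs_apply_le_norm w j) (gaussDensity_nonneg w)
    have h2 : |gaussDensity d σ w / σ ^ 2| = gaussDensity d σ w / σ ^ 2 := by
      rw [abs_of_nonneg]
      exact div_nonneg (gaussDensity_nonneg w) (sq_nonneg σ)
    calc |gaussDensity d σ w * w j / σ ^ 4| * ‖w‖ + |gaussDensity d σ w / σ ^ 2|
        ≤ gaussDensity d σ w * ‖w‖ / σ ^ 4 * ‖w‖ + gaussDensity d σ w / σ ^ 2 := by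
          rw [h2]
          exact add_le_add (mul_le_mul_of_nonneg_right h1 (norm_nonneg _)) le_rfl
      _ = c₀ / σ ^ 4 * (‖w‖ ^ 2 * Real.exp (-b * ‖w‖ ^ 2))
            + c₀ / σ ^ 2 * Real.exp (-b * ‖w‖ ^ 2) := by
          rw [hρeq]; ring
  have key_bound : ∀ (a : EuclideanSpace ℝ (Fin d)), ∀ x' ∈ Metric.ball x 1,
      ‖u a • gaussOp d σ j (a - x')‖ ≤ bound a := by
    intro a x' hx'
    have hr : ‖a - x‖ ≤ ‖a - x'‖ + 1 := by
      have h : a - x = (a - x') + (x' - x) := by abel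
      rw [h]
      refine (norm_add_le _ _).trans ?_
      have : ‖x' - x‖ ≤ 1 := by
        rw [← dist_eq_norm]
        exact le_of_lt (Metric.mem_ball.mp hx')
      linarith
    have h2 := hC₂ ‖a - x'‖ ‖a - x‖ (norm_nonneg _) (norm_nonneg _) hr
    have h0 := hC₀ ‖a - x'‖ ‖a - x‖ (norm_nonneg _) (norm_nonneg _) hr
    rw [pow_zero, one_mul] at h0
    rw [norm_smul (u a) (gaussOp d σ j (a - x')), Real.norm_eq_abs]
    calc |u a| * ‖gaussOp d σ j (a - x')‖
        ≤ M * (c₀ / σ ^ 4 * (‖a - x'‖ ^ 2 * Real.exp (-b * ‖a - x'‖ ^ 2))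
            + c₀ / σ ^ 2 * Real.exp (-b * ‖a - x'‖ ^ 2)) := by
          apply mul_le_mul (hM a) (op_norm _) (norm_nonneg _) hM0
      _ ≤ M * (c₀ / σ ^ 4 * (C₂ * Real.exp (-(b / 4) * ‖a - x‖ ^ 2))
            + c₀ / σ ^ 2 * (C₀ * Real.exp (-(b / 4) * ‖a - x‖ ^ 2))) := by
          apply mul_le_mul_of_nonneg_left ?_ hM0
          apply add_le_add
          · exact mul_le_mul_of_nonneg_left h2 (by positivity)
          · exact mul_le_mul_of_nonneg_left h0 (by positivity)
      _ = bound a := by rw [hbd]; ring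
  have op_cont : Continuous (fun a : EuclideanSpace ℝ (Fin d) => gaussOp d σ j (a - x)) := by
    unfold gaussOp
    refine Continuous.sub ?_ ?_
    · exact (((gaussDensity_continuous.comp (continuous_id.sub continuous_const)).mul
        ((EuclideanSpace.proj j).continuous.comp (continuous_id.sub continuous_const))).div_const
        _).smul ((innerSL ℝ).continuous.comp (continuous_id.sub continuous_const))
    · exact ((gaussDensity_continuous.comp (continuous_id.sub continuous_const)).div_const
        _).smul continuous_const
  have F'_meas : AEStronglyMeasurable
      (fun a : EuclideanSpace ℝ (Fin d) => u a • gaussOp d σ j (a - x)) volume :=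
    AEStronglyMeasurable.smul hu_meas.aestronglyMeasurable op_cont.aestronglyMeasurable
  have F'_int : Integrable (fun a : EuclideanSpace ℝ (Fin d) => u a • gaussOp d σ j (a - x)) := by
    refine Integrable.mono' bound_int F'_meas ?_
    exact Filter.Eventually.of_forall fun a => key_bound a x (Metric.mem_ball_self one_pos)
  refine ⟨F'_int, ?_⟩
  have hF_int : Integrable (fun a : EuclideanSpace ℝ (Fin d) =>
      u a * (gaussDensity d σ (a - x) / σ ^ 2 * (a - x) j)) := by
    obtain ⟨C₁, hC₁0, hC₁⟩ := aux_gauss_shift 1 hb0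
    refine Integrable.bdd_mul ?_ hu_meas.aestronglyMeasurable (Filter.Eventually.of_forall fun a => by
      rw [Real.norm_eq_abs]; exact hM a)
    refine Integrable.mono'
      (((aux_integrable_gauss d (by positivity : (0:ℝ) < b / 4)).comp_sub_right x).const_mul
        (c₀ / σ ^ 2 * C₁))
      (Continuous.aestronglyMeasurable (((gaussDensity_continuous.comp
        (continuous_id.sub continuous_const)).div_const _).mul
        ((EuclideanSpace.proj j).continuous.comp (continuous_id.sub continuous_const)))) ?_
    refine Filter.Eventually.of_forall fun a => ?_
    have h1 := hC₁ ‖a - x‖ ‖a - x‖ (norm_nonneg _) (norm_nonneg _) (by linarith)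
    rw [pow_one] at h1
    have hρeq : gaussDensity d σ (a - x) = c₀ * Real.exp (-b * ‖a - x‖ ^ 2) := gaussDensity_eq _
    rw [Real.norm_eq_abs, abs_mul, abs_of_nonneg (div_nonneg (gaussDensity_nonneg _) (sq_nonneg σ))]
    calc gaussDensity d σ (a - x) / σ ^ 2 * |(a - x) j|
        ≤ gaussDensity d σ (a - x) / σ ^ 2 * ‖a - x‖ := by
          exact mul_le_mul_of_nonneg_left (abs_apply_le_norm _ j)
            (div_nonneg (gaussDensity_nonneg _) (sq_nonneg σ))
      _ = c₀ / σ ^ 2 * (‖a - x‖ * Real.exp (-b * ‖a - x‖ ^ 2)) := by rw [hρeq]; ring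
      _ ≤ c₀ / σ ^ 2 * (C₁ * Real.exp (-(b / 4) * ‖a - x‖ ^ 2)) := by
          exact mul_le_mul_of_nonneg_left h1 (by positivity)
      _ = c₀ / σ ^ 2 * C₁ * Real.exp (-(b / 4) * ‖a - x‖ ^ 2) := by ring
  have := hasFDerivAt_integral_of_dominated_of_fderiv_le
    (F := fun y a => u a * (gaussDensity d σ (a - y) / σ ^ 2 * (a - y) j))
    (F' := fun y a => u a • gaussOp d σ j (a - y))
    (bound := bound) (x₀ := x) (s := Metric.ball x 1) (Metric.ball_mem_nhds x one_pos)
    (Filter.Eventually.of_forall fun y =>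
      (hu_meas.aestronglyMeasurable.mul
        (Continuous.aestronglyMeasurable (((gaussDensity_continuous.comp
          (continuous_id.sub continuous_const)).div_const _).mul
          ((EuclideanSpace.proj j).continuous.comp (continuous_id.sub continuous_const))))))
    hF_int F'_meas
    (Filter.Eventually.of_forall fun a x' hx' => key_bound a x' hx')
    bound_int
    (Filter.Eventually.of_forall fun a x' _hx' =>
      (hasFDerivAt_phi_sub hσ a x' j).const_mul (u a))
  exact this

lemma gaussSmooth_second_deriv (hσ : 0 < σ)
    (hu_meas : Measurable u) (hM : ∀ x, |u x| ≤ M)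
    (x : EuclideanSpace ℝ (Fin d)) (i j : Fin d) :
    fderiv ℝ (fun y => fderiv ℝ (gaussSmooth d σ u) y (EuclideanSpace.single j 1)) x
        (EuclideanSpace.single i 1)
      = ∫ z, u (x + z) * gaussKernel d σ i j z := by
  have hfun : (fun y => fderiv ℝ (gaussSmooth d σ u) y (EuclideanSpace.single j 1))
      = fun y => ∫ a, u a * (gaussDensity d σ (a - y) / σ ^ 2 * (a - y) j) :=
    funext fun y => fderiv_gaussSmooth_apply hσ hu_meas hM y j
  rw [hfun]
  obtain ⟨hint2, hderiv2⟩ := gaussSmooth_hasFDerivAt2 hσ hu_meas hM x j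
  rw [hderiv2.fderiv, ContinuousLinearMap.integral_apply hint2]
  rw [← integral_add_right_eq_self
    (fun a => (u a • gaussOp d σ j (a - x)) (EuclideanSpace.single i (1:ℝ))) x]
  congr 1
  funext z
  show (u (z + x) • gaussOp d σ j (z + x - x)) (EuclideanSpace.single i (1:ℝ))
      = u (x + z) * gaussKernel d σ i j z
  rw [add_sub_cancel_right, add_comm z x]
  simp only [gaussOp, gaussKernel, ContinuousLinearMap.smul_apply,
    ContinuousLinearMap.sub_apply, ContinuousLinearMap.coe_smul', Pi.smul_apply,
    innerSL_apply_apply, smul_eq_mul, EuclideanSpace.inner_single_right, conj_trivial, mul_one,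
    one_mul, EuclideanSpace.single_apply]
  have h4 : σ ^ 4 = σ ^ 2 * σ ^ 2 := by ring
  by_cases hij : i = j
  · simp only [hij, if_true]
    field_simp [h4]
  · simp only [hij, if_false]
    ring

lemma gaussKernel_integral_zero (hσ : 0 < σ) (i j : Fin d) :
    ∫ z, gaussKernel d σ i j z = 0 := by
  have h := gaussSmooth_second_deriv (u := fun _ => (1:ℝ)) (M := 1) hσ measurable_const
    (fun _ => by norm_num) 0 i j
  have hc : gaussSmooth d σ (fun _ => (1:ℝ))
      = fun _ : EuclideanSpace ℝ (Fin d) => ∫ z, 1 * gaussDensity d σ z := rfl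
  rw [hc] at h
  have h2 : (fun y : EuclideanSpace ℝ (Fin d) =>
      fderiv ℝ (fun _ : EuclideanSpace ℝ (Fin d) => (∫ z, 1 * gaussDensity d σ z : ℝ)) y
        (EuclideanSpace.single j 1)) = fun _ => (0:ℝ) := by
    funext y
    rw [fderiv_const_apply]
    rfl
  rw [h2] at h
  rw [fderiv_const_apply] at h
  simpa using h.symm

lemma gaussKernel_neg (i j : Fin d) (z : EuclideanSpace ℝ (Fin d)) :
    gaussKernel d σ i j (-z) = gaussKernel d σ i j z := by
  unfold gaussKernel
  rw [gaussDensity_neg]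
  have h1 : (-z) i = -(z i) := rfl
  have h2 : (-z) j = -(z j) := rfl
  rw [h1, h2, neg_mul_neg]

lemma gaussKernel_continuous : Continuous (gaussKernel d σ i j) := by
  unfold gaussKernel
  refine Continuous.mul ?_ gaussDensity_continuous
  refine Continuous.div_const (Continuous.sub ?_ continuous_const) _
  exact ((EuclideanSpace.proj i).continuous).mul ((EuclideanSpace.proj j).continuous)

lemma gaussKernel_integrable (hσ : 0 < σ) (i j : Fin d) :
    Integrable (gaussKernel d σ i j) := by
  set c₀ : ℝ := (2 * Real.pi * σ ^ 2) ^ (-(d : ℝ) / 2) with hc₀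
  set b : ℝ := (2 * σ ^ 2)⁻¹ with hb
  have hb0 : 0 < b := by positivity
  have hmaj : Integrable (fun z : EuclideanSpace ℝ (Fin d) =>
      c₀ / σ ^ 4 * (‖z‖ ^ 2 * Real.exp (-b * ‖z‖ ^ 2))
        + c₀ * σ ^ 2 / σ ^ 4 * Real.exp (-b * ‖z‖ ^ 2)) :=
    ((aux_integrable_poly_gauss d 2 hb0).const_mul _).add
      ((aux_integrable_gauss d hb0).const_mul _)
  refine Integrable.mono' hmaj gaussKernel_continuous.aestronglyMeasurable ?_
  refine Filter.Eventually.of_forall fun z => ?_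
  have hρeq : gaussDensity d σ z = c₀ * Real.exp (-b * ‖z‖ ^ 2) := gaussDensity_eq _
  have hρ0 : 0 ≤ gaussDensity d σ z := gaussDensity_nonneg z
  rw [Real.norm_eq_abs, gaussKernel, abs_mul, abs_of_nonneg hρ0, abs_div,
    abs_of_nonneg (by positivity : (0:ℝ) ≤ σ ^ 4)]
  have h1 : |z i * z j - σ ^ 2 * (if i = j then (1:ℝ) else 0)| ≤ ‖z‖ ^ 2 + σ ^ 2 := by
    refine (abs_sub _ _).trans ?_
    have hzi := abs_apply_le_norm z i
    have hzj := abs_apply_le_norm z j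
    have : |z i * z j| ≤ ‖z‖ ^ 2 := by
      rw [abs_mul, sq]
      exact mul_le_mul hzi hzj (abs_nonneg _) (norm_nonneg _)
    have h2 : |σ ^ 2 * (if i = j then (1:ℝ) else 0)| ≤ σ ^ 2 := by
      rw [abs_mul, abs_of_nonneg (sq_nonneg σ)]
      rcases eq_or_ne i j with h | h <;> simp [h, sq_nonneg σ]
    linarith
  calc |z i * z j - σ ^ 2 * (if i = j then (1:ℝ) else 0)| / σ ^ 4 * gaussDensity d σ z
      ≤ (‖z‖ ^ 2 + σ ^ 2) / σ ^ 4 * gaussDensity d σ z := by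
        exact mul_le_mul_of_nonneg_right
          (div_le_div_of_nonneg_right h1 (by positivity) |>.trans_eq rfl) hρ0
    _ = c₀ / σ ^ 4 * (‖z‖ ^ 2 * Real.exp (-b * ‖z‖ ^ 2))
          + c₀ * σ ^ 2 / σ ^ 4 * Real.exp (-b * ‖z‖ ^ 2) := by
        rw [hρeq]; ring

/-- variance-reduced symmetric representation of the Hessian of the
Gaussian smoothing:
`Hf(x) = ∫ ((z zᵀ − σ² I)/(2σ⁴)) (u(x+z) + u(x−z) − 2u(x)) ρ_σ(z) dz`. -/
theorem gaussSmooth_hessian_symmetric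
    (d : ℕ) (hd : 1 ≤ d) (σ : ℝ) (hσ : 0 < σ)
    (u : EuclideanSpace ℝ (Fin d) → ℝ)
    (hu_meas : Measurable u) (hu_bdd : ∃ M : ℝ, ∀ x, |u x| ≤ M) :
    ∀ (x : EuclideanSpace ℝ (Fin d)) (i j : Fin d),
      fderiv ℝ (fun y => fderiv ℝ (gaussSmooth d σ u) y (EuclideanSpace.single j 1)) x
          (EuclideanSpace.single i 1)
        = ∫ z, ((z i * z j - σ ^ 2 * (if i = j then 1 else 0)) / (2 * σ ^ 4))
            * (u (x + z) + u (x - z) - 2 * u x) * gaussDensity d σ z := by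
  intro x i j
  obtain ⟨M, hM⟩ := hu_bdd
  have h₁ := gaussSmooth_second_deriv hσ hu_meas hM x i j
  have hK_int : Integrable (gaussKernel d σ i j) := gaussKernel_integrable hσ i j
  have hMnorm : ∃ C, ∀ a : EuclideanSpace ℝ (Fin d), ‖u (x + a)‖ ≤ C :=
    ⟨M, fun a => by rw [Real.norm_eq_abs]; exact hM _⟩
  have hplus : Integrable (fun z : EuclideanSpace ℝ (Fin d) =>
      u (x + z) * gaussKernel d σ i j z) :=
    Integrable.bdd_mul hK_int
      ((hu_meas.comp (measurable_const.add measurable_id)).aestronglyMeasurable)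
        (Filter.Eventually.of_forall hMnorm.choose_spec)
  have hminus : Integrable (fun z : EuclideanSpace ℝ (Fin d) =>
      u (x - z) * gaussKernel d σ i j z) :=
    Integrable.bdd_mul hK_int
      ((hu_meas.comp (measurable_const.sub measurable_id)).aestronglyMeasurable)
      (Filter.Eventually.of_forall fun a => by rw [Real.norm_eq_abs]; exact hM _)
  have hsym : ∫ z, u (x - z) * gaussKernel d σ i j z
      = ∫ z, u (x + z) * gaussKernel d σ i j z := by
    rw [← integral_neg_eq_self (fun z => u (x - z) * gaussKernel d σ i j z) volume]
    congr 1
    funext z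
    show u (x - -z) * gaussKernel d σ i j (-z) = u (x + z) * gaussKernel d σ i j z
    rw [sub_neg_eq_add, gaussKernel_neg]
  have hmoment : ∫ z, gaussKernel d σ i j z = 0 := gaussKernel_integral_zero hσ i j
  have hsplit : (fun z : EuclideanSpace ℝ (Fin d) =>
      ((z i * z j - σ ^ 2 * (if i = j then (1:ℝ) else 0)) / (2 * σ ^ 4))
        * (u (x + z) + u (x - z) - 2 * u x) * gaussDensity d σ z)
      = fun z => (1/2) * (u (x + z) * gaussKernel d σ i j z)
          + (1/2) * (u (x - z) * gaussKernel d σ i j z)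
          - u x * gaussKernel d σ i j z := by
    funext z
    rw [gaussKernel]
    field_simp
  have hA : Integrable (fun z : EuclideanSpace ℝ (Fin d) =>
      (1/2 : ℝ) * (u (x + z) * gaussKernel d σ i j z)) := hplus.const_mul _
  have hB : Integrable (fun z : EuclideanSpace ℝ (Fin d) =>
      (1/2 : ℝ) * (u (x - z) * gaussKernel d σ i j z)) := hminus.const_mul _
  have hAB : Integrable (fun z : EuclideanSpace ℝ (Fin d) =>
      (1/2 : ℝ) * (u (x + z) * gaussKernel d σ i j z)
        + (1/2 : ℝ) * (u (x - z) * gaussKernel d σ i j z)) := hA.add hB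
  have hC : Integrable (fun z : EuclideanSpace ℝ (Fin d) =>
      u x * gaussKernel d σ i j z) := hK_int.const_mul _
  rw [h₁, hsplit, integral_sub hAB hC, integral_add hA hB,
    integral_const_mul, integral_const_mul, integral_const_mul]
  rw [hsym, hmoment]
  ring
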